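/- Let 0 < α < d, f ∈ L¹(ℝ^d), and let B = B(z,r) be a ball with x ∈ closure(B) attaining the supremum defining the uncentered fractional maximal function M̃_α f(x). Then for every h ∈ ℝ^d, M̃_α f(x+h) ≥ (r+|h|)^α ⨍_{B(z+h, r+|h|)} |f(y)| dy, and consequently limsup_{h→0} (M̃_α f(x) - M̃_α f(x+h)) / |h| ≤ (d - α) r^{α-1} ⨍_{B(z,r)} |f(y)| dy. -/

import Mathlib

open MeasureTheory Filter

/-- The uncentered fractional Hardy–Littlewood maximal function, with values in
`ℝ≥0∞`: `M̃_α f(x) = sup { r^α ⨍_B |f| : B = B(z,r), r > 0, x ∈ closure B }`. -/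
noncomputable def uncenteredFracMax {d : ℕ} (α : ℝ)
    (f : EuclideanSpace ℝ (Fin d) → ℝ) (x : EuclideanSpace ℝ (Fin d)) : ENNReal :=
  ⨆ (z : EuclideanSpace ℝ (Fin d)) (r : ℝ) (_ : 0 < r) (_ : x ∈ closure (Metric.ball z r)),
    ENNReal.ofReal (r ^ α * ⨍ y in Metric.ball z r, |f y|)

private lemma sInf_helper {S : Set ℝ} {L : ℝ} (hL : 0 ≤ L)
    (h : S = ∅ ∨ ∀ ε > 0, L + ε ∈ S) : sInf S ≤ L := by
  rcases h with h | h
  · simpa [h, Real.sInf_empty] using hL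
  · by_cases hb : BddBelow S
    · by_contra hcon
      push_neg at hcon
      have h1 := csInf_le hb (h ((sInf S - L) / 2) (by linarith))
      linarith
    · rw [Real.sInf_of_not_bddBelow hb]; exact hL

/-- if `B(z,r)` attains the supremum defining `M̃_α f(x)`, then for
every `h`, `M̃_α f(x+h) ≥ (r+|h|)^α ⨍_{B(z+h,r+|h|)} |f|`, and consequently
`limsup_{h→0} (M̃_α f(x) - M̃_α f(x+h))/|h| ≤ (d-α) r^{α-1} ⨍_{B(z,r)} |f|`. -/
theorem statement6 {d : ℕ} (α : ℝ) (hα : 0 < α) (hαd : α < d)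
    (f : EuclideanSpace ℝ (Fin d) → ℝ) (hf : Integrable f)
    (x z : EuclideanSpace ℝ (Fin d)) (r : ℝ) (hr : 0 < r)
    (hx : x ∈ closure (Metric.ball z r))
    (hatt : ENNReal.ofReal (r ^ α * ⨍ y in Metric.ball z r, |f y|) =
      uncenteredFracMax α f x) :
    (∀ h : EuclideanSpace ℝ (Fin d),
        ENNReal.ofReal ((r + ‖h‖) ^ α * ⨍ y in Metric.ball (z + h) (r + ‖h‖), |f y|) ≤
          uncenteredFracMax α f (x + h)) ∧
      limsup (fun h : EuclideanSpace ℝ (Fin d) =>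
          ((uncenteredFracMax α f x).toReal - (uncenteredFracMax α f (x + h)).toReal) / ‖h‖)
        (nhdsWithin 0 {0}ᶜ) ≤
        (d - α) * r ^ (α - 1) * ⨍ y in Metric.ball z r, |f y| := by
  have hd : 0 < d := by
    have : (0 : ℝ) < d := hα.trans hαd
    exact_mod_cast this
  haveI : Nonempty (Fin d) := ⟨⟨0, hd⟩⟩
  set A : ℝ := ⨍ y in Metric.ball z r, |f y| with hAdef
  have hIr : (0:ℝ) ≤ ∫ y in Metric.ball z r, |f y| :=
    integral_nonneg fun y => abs_nonneg _
  have hA : 0 ≤ A := by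
    rw [hAdef, setAverage_eq]
    exact smul_nonneg (by positivity) hIr
  set C : ℝ := r ^ α * A with hCdef
  have hC0 : 0 ≤ C := mul_nonneg (Real.rpow_nonneg hr.le _) hA
  -- part 1
  have part1 : ∀ h : EuclideanSpace ℝ (Fin d),
      ENNReal.ofReal ((r + ‖h‖) ^ α * ⨍ y in Metric.ball (z + h) (r + ‖h‖), |f y|) ≤
        uncenteredFracMax α f (x + h) := by
    intro h
    have hs : 0 < r + ‖h‖ := by positivity
    have hxz : dist x z ≤ r := by
      have := Metric.closure_ball_subset_closedBall hx
      rwa [Metric.mem_closedBall] at this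
    have hxh : x + h ∈ closure (Metric.ball (z + h) (r + ‖h‖)) := by
      rw [closure_ball _ hs.ne', Metric.mem_closedBall, dist_add_right]
      exact hxz.trans (le_add_of_nonneg_right (norm_nonneg h))
    exact le_iSup_of_le (z + h) (le_iSup_of_le (r + ‖h‖)
      (le_iSup_of_le hs (le_iSup_of_le hxh le_rfl)))
  refine ⟨part1, ?_⟩
  -- volume computations
  set c : ℝ := (volume (Metric.ball (0 : EuclideanSpace ℝ (Fin d)) 1)).toReal with hcdef
  have hc : 0 < c := by
    rw [hcdef]
    refine ENNReal.toReal_pos ?_ (measure_ball_lt_top).ne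
    exact (Metric.measure_ball_pos _ _ one_pos).ne'
  have hvol : ∀ (w : EuclideanSpace ℝ (Fin d)) (t : ℝ), 0 ≤ t →
      (volume (Metric.ball w t)).toReal = t ^ d * c := by
    intro w t ht
    rw [Measure.addHaar_ball volume w ht, ENNReal.toReal_mul,
      ENNReal.toReal_ofReal (by positivity), finrank_euclideanSpace_fin]
  -- key comparison
  have key : ∀ h : EuclideanSpace ℝ (Fin d),
      (r + ‖h‖) ^ (α - (d:ℝ)) * (r ^ d * A) ≤
        (r + ‖h‖) ^ α * ⨍ y in Metric.ball (z + h) (r + ‖h‖), |f y| := by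
    intro h
    set s : ℝ := r + ‖h‖ with hsdef
    have hs : 0 < s := by rw [hsdef]; positivity
    have hsub : Metric.ball z r ⊆ Metric.ball (z + h) s := by
      apply Metric.ball_subset_ball'
      rw [hsdef, dist_self_add_right]
    have hII : (∫ y in Metric.ball z r, |f y|) ≤ ∫ y in Metric.ball (z + h) s, |f y| := by
      refine setIntegral_mono_set (hf.abs.integrableOn) ?_ (HasSubset.Subset.eventuallyLE hsub)
      exact Filter.Eventually.of_forall fun y => abs_nonneg _
    rw [hAdef, setAverage_eq, setAverage_eq, measureReal_def, measureReal_def, hvol z r hr.le, hvol (z + h) s hs.le,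
      smul_eq_mul, smul_eq_mul]
    have hrd : r ^ d * (r ^ d * c)⁻¹ = c⁻¹ := by
      rw [mul_inv]
      field_simp
    have hsp : s ^ α * (s ^ d * c)⁻¹ = s ^ (α - (d:ℝ)) * c⁻¹ := by
      rw [mul_inv, ← Real.rpow_natCast s d, ← Real.rpow_neg hs.le, ← mul_assoc,
        ← Real.rpow_add hs]
      ring_nf
    calc s ^ (α - (d:ℝ)) * (r ^ d * ((r ^ d * c)⁻¹ * ∫ y in Metric.ball z r, |f y|))
        = s ^ (α - (d:ℝ)) * c⁻¹ * ∫ y in Metric.ball z r, |f y| := by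
          rw [← mul_assoc, ← mul_assoc, mul_assoc (s ^ (α - (d:ℝ))), hrd]
      _ ≤ s ^ (α - (d:ℝ)) * c⁻¹ * ∫ y in Metric.ball (z + h) s, |f y| := by
          apply mul_le_mul_of_nonneg_left hII
          positivity
      _ = s ^ α * ((s ^ d * c)⁻¹ * ∫ y in Metric.ball (z + h) s, |f y|) := by
          rw [← mul_assoc, ← hsp]
  have hMx : (uncenteredFracMax α f x).toReal = C := by
    rw [← hatt, ENNReal.toReal_ofReal hC0]
  set L : ℝ := ((d : ℝ) - α) * r ^ (α - 1) * A with hLdef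
  have hL0 : 0 ≤ L := by
    apply mul_nonneg (mul_nonneg (by linarith) (Real.rpow_nonneg hr.le _)) hA
  rw [Filter.limsup_eq]
  apply sInf_helper hL0
  by_cases hev : ∀ᶠ h : EuclideanSpace ℝ (Fin d) in nhdsWithin 0 {0}ᶜ, uncenteredFracMax α f (x + h) ≠ ⊤
  · right
    intro ε hε
    simp only [Set.mem_setOf_eq]
    -- the slope limit
    set p : ℝ := α - (d:ℝ) with hpdef
    have hderiv : HasDerivAt (fun t : ℝ => (r + t) ^ p) (1 * p * r ^ (p - 1)) 0 := by
      have h1 : HasDerivAt (fun t : ℝ => r + t) 1 0 := (hasDerivAt_id 0).const_add r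
      have h2 := h1.rpow_const (p := p) (Or.inl (by simp [hr.ne']))
      simpa using h2
    have hslope : Filter.Tendsto (slope (fun t : ℝ => (r + t) ^ p) 0)
        (nhdsWithin 0 {(0:ℝ)}ᶜ) (nhds (1 * p * r ^ (p - 1))) :=
      hasDerivAt_iff_tendsto_slope.mp hderiv
    have hψ : Filter.Tendsto (fun t : ℝ => (C - (r + t) ^ p * (r ^ d * A)) / t)
        (nhdsWithin 0 {(0:ℝ)}ᶜ) (nhds L) := by
      have heq : ∀ t : ℝ, (C - (r + t) ^ p * (r ^ d * A)) / t
          = (-(r ^ d * A)) * slope (fun t : ℝ => (r + t) ^ p) 0 t := by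
        intro t
        have hC' : C = r ^ p * (r ^ d * A) := by
          rw [hCdef, hpdef, ← Real.rpow_natCast r d, ← mul_assoc, ← Real.rpow_add hr]
          ring_nf
        rw [slope_def_field, hC']
        simp only [add_zero, sub_zero]
        ring
      have hlim : (-(r ^ d * A)) * (1 * p * r ^ (p - 1)) = L := by
        rw [hLdef, hpdef, ← Real.rpow_natCast r d]
        rw [show α - (d:ℝ) - 1 = (α - 1) + (-(d:ℝ)) by ring, Real.rpow_add hr,
          Real.rpow_neg hr.le]
        field_simp [(Real.rpow_pos_of_pos hr (d:ℝ)).ne']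
        ring
      rw [← hlim]
      simp only [heq]
      exact (hslope.const_mul _)
    have hnorm : Filter.Tendsto (fun h : EuclideanSpace ℝ (Fin d) => ‖h‖)
        (nhdsWithin 0 {(0 : EuclideanSpace ℝ (Fin d))}ᶜ) (nhdsWithin 0 {(0:ℝ)}ᶜ) := by
      rw [tendsto_nhdsWithin_iff]
      constructor
      · have := (continuous_norm (E := EuclideanSpace ℝ (Fin d))).tendsto 0
        simpa using this.mono_left nhdsWithin_le_nhds
      · filter_upwards [self_mem_nhdsWithin] with h hh
        simpa using hh
    have htend : Filter.Tendsto
        (fun h : EuclideanSpace ℝ (Fin d) => (C - (r + ‖h‖) ^ p * (r ^ d * A)) / ‖h‖)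
        (nhdsWithin 0 {(0 : EuclideanSpace ℝ (Fin d))}ᶜ) (nhds L) := hψ.comp hnorm
    have hlt : ∀ᶠ h : EuclideanSpace ℝ (Fin d) in nhdsWithin 0 {0}ᶜ,
        (C - (r + ‖h‖) ^ p * (r ^ d * A)) / ‖h‖ < L + ε :=
      htend.eventually_lt_const (by linarith)
    filter_upwards [hev, hlt, self_mem_nhdsWithin] with h hfin hlth hh0
    have hhn : 0 < ‖h‖ := by
      simp only [Set.mem_compl_iff, Set.mem_singleton_iff] at hh0
      exact norm_pos_iff.mpr hh0
    have hub : (r + ‖h‖) ^ p * (r ^ d * A) ≤ (uncenteredFracMax α f (x + h)).toReal := by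
      have h2 : ENNReal.ofReal ((r + ‖h‖) ^ p * (r ^ d * A)) ≤
          uncenteredFracMax α f (x + h) :=
        le_trans (ENNReal.ofReal_le_ofReal (key h)) (part1 h)
      have h3 := ENNReal.toReal_mono hfin h2
      rwa [ENNReal.toReal_ofReal (by positivity)] at h3
    have hstep : ((uncenteredFracMax α f x).toReal
        - (uncenteredFracMax α f (x + h)).toReal) / ‖h‖
        ≤ (C - (r + ‖h‖) ^ p * (r ^ d * A)) / ‖h‖ := by
      rw [hMx]
      gcongr
    exact le_of_lt (lt_of_le_of_lt hstep hlth) |>.trans (le_refl _)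
  · by_cases hCpos : 0 < C
    · left
      rw [Set.eq_empty_iff_forall_notMem]
      intro a ha
      simp only [Set.mem_setOf_eq] at ha
      have hfreq : ∃ᶠ h : EuclideanSpace ℝ (Fin d) in nhdsWithin 0 {0}ᶜ, uncenteredFracMax α f (x + h) = ⊤ := by
        rw [Filter.not_eventually] at hev
        apply hev.mono
        intro h hh
        simpa using hh
      have hsmall : ∀ᶠ h : EuclideanSpace ℝ (Fin d) in nhdsWithin 0 {0}ᶜ, ‖h‖ < C / (|a| + 1) := by
        have hmem : Metric.ball (0 : EuclideanSpace ℝ (Fin d)) (C / (|a| + 1)) ∈ nhds (0 : EuclideanSpace ℝ (Fin d)) :=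
          Metric.ball_mem_nhds _ (by positivity)
        apply Filter.Eventually.filter_mono nhdsWithin_le_nhds
        filter_upwards [hmem] with h hh
        simpa [mem_ball_zero_iff] using hh
      obtain ⟨h, htop, hqa, hsm, hne⟩ :=
        (hfreq.and_eventually (ha.and (hsmall.and self_mem_nhdsWithin))).exists
      have hh0 : h ≠ 0 := by simpa using hne
      have hhn : 0 < ‖h‖ := norm_pos_iff.mpr hh0
      have hq : ((uncenteredFracMax α f x).toReal
          - (uncenteredFracMax α f (x + h)).toReal) / ‖h‖ = C / ‖h‖ := by
        rw [hMx, htop, ENNReal.toReal_top, sub_zero]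
      rw [hq] at hqa
      have : |a| + 1 < C / ‖h‖ := by
        rw [lt_div_iff₀ hhn]
        rw [lt_div_iff₀ (by positivity : (0:ℝ) < |a| + 1)] at hsm
        linarith [hsm]
      have haa := le_abs_self a
      linarith
    · right
      intro ε hε
      simp only [Set.mem_setOf_eq]
      have hCz : C = 0 := le_antisymm (not_lt.mp hCpos) hC0
      apply Filter.Eventually.of_forall
      intro h
      have hnum : (uncenteredFracMax α f x).toReal
          - (uncenteredFracMax α f (x + h)).toReal ≤ 0 := by
        rw [hMx, hCz]
        simp [ENNReal.toReal_nonneg]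
      have hdvn : ((uncenteredFracMax α f x).toReal
          - (uncenteredFracMax α f (x + h)).toReal) / ‖h‖ ≤ 0 :=
        div_nonpos_of_nonpos_of_nonneg hnum (norm_nonneg h)
      linarith
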